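/- Let A ∈ R^{p×q} with krank(A) = k ≥ 2, and let n ≥ 2. For any vector v ∈ R^q with 2 ≤ ||v||_0 ≤ k, the tensor T = Σ_j v(j) · a_j^{∘n} (the weighted sum of n-th tensor powers of the columns of A in the support of v) has tensor (CP) rank equal to ||v||_0; in particular T is not rank one. -/

import Mathlib

/-- The Kruskal rank of `A ∈ ℝ^{p×q}`. -/
noncomputable def krank {p q : ℕ} (A : Matrix (Fin p) (Fin q) ℝ) : ℕ :=
  sSup {k : ℕ | k ≤ q ∧ ∀ S : Finset (Fin q), S.card = k →
    LinearIndependent ℝ (fun j : S => fun i : Fin p => A i (j : Fin q))}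

/-- The CP (tensor) rank of an order-`n` tensor `T ∈ (ℝᵖ)^{⊗n}` (represented as a
function on index tuples): the minimal number of rank-one tensors summing to `T`. -/
noncomputable def cprank {p n : ℕ} (T : (Fin n → Fin p) → ℝ) : ℕ :=
  sInf {m : ℕ | ∃ f : Fin m → Fin n → Fin p → ℝ,
    ∀ t : Fin n → Fin p, T t = ∑ s : Fin m, ∏ k : Fin n, f s k (t k)}

/-- Let `A ∈ ℝ^{p×q}` with `krank(A) = k ≥ 2` and `n ≥ 2`. For any `v ∈ ℝ^q` with
`2 ≤ ‖v‖₀ ≤ k`, the tensor `T = Σⱼ v(j)·aⱼ^{∘n}` (weighted sum of `n`-th tensor powers of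
the columns of `A`) has CP rank exactly `‖v‖₀`; in particular `T` is not rank one. -/
lemma krank_spec {p q k : ℕ} (A : Matrix (Fin p) (Fin q) ℝ) (hk : krank A = k) :
    k ≤ q ∧ ∀ S : Finset (Fin q), S.card = k →
      LinearIndependent ℝ (fun j : S => fun i : Fin p => A i (j : Fin q)) := by
  rw [← hk]
  have : krank A ∈ {k : ℕ | k ≤ q ∧ ∀ S : Finset (Fin q), S.card = k →
      LinearIndependent ℝ (fun j : S => fun i : Fin p => A i (j : Fin q))} := by
    apply Nat.sSup_mem
    · refine ⟨0, Nat.zero_le q, fun S hS => ?_⟩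
      have : S = ∅ := Finset.card_eq_zero.mp hS
      subst this
      exact linearIndependent_empty_type
    · exact ⟨q, fun x hx => hx.1⟩
  exact this

lemma exists_dual_family {ι : Type*} [Fintype ι] [DecidableEq ι] {P : ℕ} {b : ι → Fin P → ℝ}
    (hb : LinearIndependent ℝ b) :
    ∃ w : ι → Fin P → ℝ, ∀ j l : ι, ∑ i, w j i * b l i = if l = j then 1 else 0 := by
  classical
  set L : (ι → ℝ) →ₗ[ℝ] (Fin P → ℝ) := Fintype.linearCombination ℝ b with hL
  have hker : LinearMap.ker L = ⊥ := by
    rw [LinearMap.ker_eq_bot']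
    intro c hc
    funext j
    exact Fintype.linearIndependent_iff.mp hb c (by simpa [hL, Fintype.linearCombination_apply] using hc) j
  obtain ⟨g, hg⟩ := L.exists_leftInverse_of_injective hker
  refine ⟨fun j i => g (Pi.single i 1) j, fun j l => ?_⟩
  have h1 : g (b l) = Pi.single l 1 := by
    have : L (Pi.single l 1) = b l := by
      simp [hL, Fintype.linearCombination_apply_single]
    rw [← this, ← LinearMap.comp_apply, hg, LinearMap.id_apply]
  have h2 : b l = ∑ i, b l i • (Pi.single i (1:ℝ) : Fin P → ℝ) := by
    funext x
    simp [Pi.single_apply, Finset.sum_apply]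
  have h3 : g (b l) = ∑ i, b l i • g (Pi.single i (1:ℝ)) := by
    conv_lhs => rw [h2]
    rw [map_sum]
    simp_rw [map_smul]
  calc ∑ i, g (Pi.single i 1) j * b l i = (∑ i, b l i • g (Pi.single i (1:ℝ))) j := by
        simp [Finset.sum_apply, mul_comm]
      _ = g (b l) j := by rw [← h3]
      _ = (if l = j then 1 else 0) := by rw [h1]; simp [Pi.single_apply, eq_comm]

theorem cprank_eq_support_size {p q n k : ℕ}
    (A : Matrix (Fin p) (Fin q) ℝ) (hk : krank A = k) (hk2 : 2 ≤ k) (hn : 2 ≤ n)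
    (v : Fin q → ℝ)
    (hv2 : 2 ≤ Nat.card {j : Fin q // v j ≠ 0})
    (hvk : Nat.card {j : Fin q // v j ≠ 0} ≤ k) :
    cprank (fun t : Fin n → Fin p => ∑ j : Fin q, v j * ∏ i : Fin n, A (t i) j) =
      Nat.card {j : Fin q // v j ≠ 0} := by
  classical
  obtain ⟨m', rfl⟩ : ∃ m', n = m' + 2 := ⟨n - 2, by omega⟩
  obtain ⟨hkq, hLIk⟩ := krank_spec A hk
  set r := Nat.card {j : Fin q // v j ≠ 0} with hrdef
  have hrcard : Fintype.card {j : Fin q // v j ≠ 0} = r := Nat.card_eq_fintype_card.symm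
  set S : Finset (Fin q) := Finset.univ.filter (fun j => v j ≠ 0) with hSdef
  have hSr : S.card = r := by
    rw [← hrcard, Fintype.card_subtype]
  -- linear independence of the support columns
  obtain ⟨S', hSS', _, hS'card⟩ :=
    Finset.exists_subsuperset_card_eq (n := k) (Finset.subset_univ S)
      (by rw [hSr]; exact hvk) (by simpa using hkq)
  have hLI' := hLIk S' hS'card
  set b : {j : Fin q // v j ≠ 0} → Fin p → ℝ := fun j => fun i => A i (j : Fin q) with hbdef
  have hbLI : LinearIndependent ℝ b := by
    have hinj : Function.Injective
        (fun j : {j : Fin q // v j ≠ 0} =>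
          (⟨(j : Fin q), hSS' (by simp [hSdef, j.2])⟩ : S')) := by
      intro a c hac
      simpa [Subtype.ext_iff] using hac
    exact hLI'.comp _ hinj
  obtain ⟨w, hw⟩ := exists_dual_family hbLI
  have e : {j : Fin q // v j ≠ 0} ≃ Fin r := Fintype.equivFinOfCardEq hrcard
  -- upper bound: an explicit decomposition with r terms
  have hub : r ∈ {m : ℕ | ∃ f : Fin m → Fin (m' + 2) → Fin p → ℝ,
      ∀ t : Fin (m' + 2) → Fin p,
        (∑ j : Fin q, v j * ∏ i : Fin (m' + 2), A (t i) j) =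
          ∑ s : Fin m, ∏ kk : Fin (m' + 2), f s kk (t kk)} := by
    refine ⟨fun s kk i => if kk = 0 then v (e.symm s) * A i (e.symm s) else A i (e.symm s),
      fun t => ?_⟩
    have hprod : ∀ j : Fin q,
        (∏ kk : Fin (m' + 2),
          (if kk = 0 then v j * A (t kk) j else A (t kk) j)) =
        v j * ∏ i : Fin (m' + 2), A (t i) j := by
      intro j
      rw [Fin.prod_univ_succ, Fin.prod_univ_succ (f := fun i : Fin (m' + 2) => A (t i) j)]
      simp [Fin.succ_ne_zero, mul_assoc]
    simp_rw [hprod]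
    rw [e.symm.sum_comp (fun j => v (j : Fin q) * ∏ i : Fin (m' + 2), A (t i) (j : Fin q))]
    rw [← Finset.sum_subtype S (by simp [hSdef]) (fun j => v j * ∏ i : Fin (m' + 2), A (t i) j)]
    rw [Finset.sum_filter_of_ne]
    intro x _ hx
    intro hvx
    exact hx (by rw [hvx, zero_mul])
  -- lower bound
  have hlb : ∀ m ∈ {m : ℕ | ∃ f : Fin m → Fin (m' + 2) → Fin p → ℝ,
      ∀ t : Fin (m' + 2) → Fin p,
        (∑ j : Fin q, v j * ∏ i : Fin (m' + 2), A (t i) j) =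
          ∑ s : Fin m, ∏ kk : Fin (m' + 2), f s kk (t kk)}, r ≤ m := by
    rintro m ⟨f, hf⟩
    set g : Fin m → Fin p → ℝ := fun s i => f s 0 i with hgdef
    have key : ∀ j : {j : Fin q // v j ≠ 0}, b j ∈ Submodule.span ℝ (Set.range g) := by
      intro j
      set c : Fin m → ℝ := fun s => ∏ k' : Fin (m' + 1), ∑ x, f s k'.succ x * w j x with hcdef
      -- the contraction of T along modes 2..n with w j
      have eq1 : ∀ i : Fin p,
          (∑ t' : Fin (m' + 1) → Fin p,
            (∑ l : Fin q, v l * ∏ kk : Fin (m' + 2), A ((Fin.cons i t' : Fin (m' + 2) → Fin p) kk) l) *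
              ∏ k' : Fin (m' + 1), w j (t' k')) = v j * A i j := by
        intro i
        have step1 : ∀ t' : Fin (m' + 1) → Fin p,
            (∑ l : Fin q, v l * ∏ kk : Fin (m' + 2), A ((Fin.cons i t' : Fin (m' + 2) → Fin p) kk) l) *
              ∏ k' : Fin (m' + 1), w j (t' k') =
            ∑ l : Fin q, (v l * A i l) *
              ∏ k' : Fin (m' + 1), (A (t' k') l * w j (t' k')) := by
          intro t'
          rw [Finset.sum_mul]
          refine Finset.sum_congr rfl fun l _ => ?_
          rw [Fin.prod_univ_succ]
          simp only [Fin.cons_zero, Fin.cons_succ]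
          rw [Finset.prod_mul_distrib]
          ring
        simp_rw [step1]
        rw [Finset.sum_comm]
        have step2 : ∀ l : Fin q,
            (∑ t' : Fin (m' + 1) → Fin p, (v l * A i l) *
              ∏ k' : Fin (m' + 1), (A (t' k') l * w j (t' k'))) =
            (v l * A i l) * (∑ x, A x l * w j x) ^ (m' + 1) := by
          intro l
          rw [← Finset.mul_sum, ← Fintype.prod_sum (f := fun (k' : Fin (m' + 1)) (x : Fin p) => A x l * w j x)]
          rw [Finset.prod_const]
          simp
        simp_rw [step2]
        rw [Finset.sum_eq_single (j : Fin q)]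
        · have : (∑ x, A x (j : Fin q) * w j x) = 1 := by
            have := hw j j
            rw [if_pos rfl] at this
            rw [← this]
            exact Finset.sum_congr rfl fun x _ => mul_comm _ _
          rw [this, one_pow, mul_comm (v j * A i j) 1, one_mul]
        · intro l _ hlj
          by_cases hvl : v l = 0
          · rw [hvl, zero_mul, zero_mul]
          · have : (∑ x, A x l * w j x) = 0 := by
              have := hw j ⟨l, hvl⟩
              rw [if_neg (by simpa [Subtype.ext_iff] using hlj)] at this
              rw [← this]
              exact Finset.sum_congr rfl fun x _ => mul_comm _ _
            rw [this, zero_pow (Nat.succ_ne_zero m'), mul_zero]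
        · intro h
          exact absurd (Finset.mem_univ _) h
      have eq2 : ∀ i : Fin p,
          (∑ t' : Fin (m' + 1) → Fin p,
            (∑ l : Fin q, v l * ∏ kk : Fin (m' + 2), A ((Fin.cons i t' : Fin (m' + 2) → Fin p) kk) l) *
              ∏ k' : Fin (m' + 1), w j (t' k')) = ∑ s : Fin m, c s * g s i := by
        intro i
        have step1 : ∀ t' : Fin (m' + 1) → Fin p,
            (∑ l : Fin q, v l * ∏ kk : Fin (m' + 2), A ((Fin.cons i t' : Fin (m' + 2) → Fin p) kk) l) *
              ∏ k' : Fin (m' + 1), w j (t' k') =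
            ∑ s : Fin m, g s i *
              ∏ k' : Fin (m' + 1), (f s k'.succ (t' k') * w j (t' k')) := by
          intro t'
          rw [hf (Fin.cons i t' : Fin (m' + 2) → Fin p), Finset.sum_mul]
          refine Finset.sum_congr rfl fun s _ => ?_
          rw [Fin.prod_univ_succ]
          simp only [Fin.cons_zero, Fin.cons_succ]
          rw [Finset.prod_mul_distrib]
          ring
        simp_rw [step1]
        rw [Finset.sum_comm]
        refine Finset.sum_congr rfl fun s _ => ?_
        rw [← Finset.mul_sum,
          ← Fintype.prod_sum (f := fun (k' : Fin (m' + 1)) (x : Fin p) => f s k'.succ x * w j x)]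
        rw [mul_comm]
      have hbj : b j = ∑ s : Fin m, ((v j)⁻¹ * c s) • g s := by
        funext i
        have h1 := eq1 i
        have h2 := eq2 i
        rw [h2] at h1
        have hvj := j.2
        simp only [Finset.sum_apply, Pi.smul_apply, smul_eq_mul]
        have : A i (j : Fin q) = (v j)⁻¹ * (v j * A i (j : Fin q)) := by
          field_simp
        rw [hbdef]
        simp only
        rw [this, ← h1, Finset.mul_sum]
        exact Finset.sum_congr rfl fun s _ => by ring
      rw [hbj]
      exact Submodule.sum_mem _ fun s _ =>
        Submodule.smul_mem _ _ (Submodule.subset_span ⟨s, rfl⟩)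
    have hb' : LinearIndependent ℝ
        (fun j => (⟨b j, key j⟩ : Submodule.span ℝ (Set.range g))) :=
      LinearIndependent.of_comp (Submodule.span ℝ (Set.range g)).subtype hbLI
    have h1 := hb'.fintype_card_le_finrank
    have h2 : Module.finrank ℝ (Submodule.span ℝ (Set.range g)) ≤ m := by
      have := finrank_range_le_card (R := ℝ) g
      simpa [Set.finrank] using this
    calc r = Fintype.card {j : Fin q // v j ≠ 0} := hrcard.symm
      _ ≤ Module.finrank ℝ (Submodule.span ℝ (Set.range g)) := h1
      _ ≤ m := h2
  exact Nat.le_antisymm (Nat.sInf_le hub) (le_csInf ⟨r, hub⟩ hlb)
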